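/- Let I : ℝᵈ → Matrix (Fin d) (Fin d) ℝ be continuous with I(θ) symmetric positive definite for each θ, and let A(θ) = I(θ)^{1/2} B(θ) I(θ)^{1/2} where B(θ) is symmetric positive definite. Then λ_min(A(θ)^{-1/2} I(θ) A(θ)^{-1/2}) = λ_min(B(θ)⁻¹) = 1/λ_max(B(θ)). -/

import Mathlib

open Matrix Filter Asymptotics MeasureTheory
open scoped Topology

noncomputable def minEig {d : ℕ} (M : Matrix (Fin d) (Fin d) ℝ) : ℝ := sInf (spectrum ℝ M)

/-- The square root of a positive semidefinite matrix, as `Matrix.PosSemidef.sqrt` was defined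
in Mathlib of December 2024 (removed since). -/
noncomputable def Matrix.PosSemidef.sqrt {n : Type*} [Fintype n]
    [DecidableEq n] {A : Matrix n n ℝ} (hA : A.PosSemidef) : Matrix n n ℝ :=
  hA.1.eigenvectorUnitary.1 * diagonal (Real.sqrt ∘ hA.1.eigenvalues) *
    (star hA.1.eigenvectorUnitary : Matrix n n ℝ)

open Classical in
noncomputable def sqrtInv {d : ℕ} (A : Matrix (Fin d) (Fin d) ℝ) : Matrix (Fin d) (Fin d) ℝ :=
  if h : A.PosSemidef then h.sqrt⁻¹ else 0

noncomputable def quadForm {d : ℕ} (M : Matrix (Fin d) (Fin d) ℝ) (v : EuclideanSpace ℝ (Fin d)) : ℝ :=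
  (inner ℝ v (Matrix.toEuclideanLin M v) : ℝ)

lemma sqrt_psd_aux {n : Type*} [Fintype n] [DecidableEq n] {A : Matrix n n ℝ}
    (hA : A.PosSemidef) : hA.sqrt.PosSemidef := by
  unfold Matrix.PosSemidef.sqrt
  have h := (PosSemidef.diagonal (d := Real.sqrt ∘ hA.1.eigenvalues)
    (fun i => Real.sqrt_nonneg _)).mul_mul_conjTranspose_same
      (hA.1.eigenvectorUnitary : Matrix n n ℝ)
  rw [Matrix.star_eq_conjTranspose]
  exact h

lemma sqrt_mul_self_aux {n : Type*} [Fintype n] [DecidableEq n] {A : Matrix n n ℝ}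
    (hA : A.PosSemidef) : hA.sqrt * hA.sqrt = A := by
  unfold Matrix.PosSemidef.sqrt
  have hU := Unitary.coe_star_mul_self hA.1.eigenvectorUnitary
  have hD : diagonal (Real.sqrt ∘ hA.1.eigenvalues) * diagonal (Real.sqrt ∘ hA.1.eigenvalues)
      = diagonal (RCLike.ofReal ∘ hA.1.eigenvalues) := by
    rw [diagonal_mul_diagonal]; congr 1; funext i
    simp [Real.mul_self_sqrt (hA.eigenvalues_nonneg i)]
  conv_rhs => rw [hA.1.spectral_theorem, Unitary.conjStarAlgAut_apply]
  rw [← hD]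
  calc _ = (hA.1.eigenvectorUnitary : Matrix n n ℝ) * diagonal (Real.sqrt ∘ hA.1.eigenvalues) *
        ((star hA.1.eigenvectorUnitary : Matrix n n ℝ) * hA.1.eigenvectorUnitary) *
        diagonal (Real.sqrt ∘ hA.1.eigenvalues) * (star hA.1.eigenvectorUnitary : Matrix n n ℝ) := by
        simp only [mul_assoc]
    _ = _ := by rw [hU, mul_one]; simp only [mul_assoc]

/-- Conjugation by an invertible matrix preserves the spectrum. -/
lemma spectrum_conj_aux {d : ℕ} (M a : Matrix (Fin d) (Fin d) ℝ) (h : IsUnit M) :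
    spectrum ℝ (M * a * M⁻¹) = spectrum ℝ a := by
  lift M to (Matrix (Fin d) (Fin d) ℝ)ˣ using h
  rw [← Matrix.coe_units_inv, spectrum.units_conjugate]

/-- For a finite set of positive reals, the infimum of the inverses is the inverse
of the supremum. -/
lemma sInf_inv_aux (s : Set ℝ) (hfin : s.Finite) (hpos : ∀ x ∈ s, 0 < x) :
    sInf s⁻¹ = (sSup s)⁻¹ := by
  rcases s.eq_empty_or_nonempty with rfl | hne
  · simp [Real.sInf_empty, Real.sSup_empty]
  · have hSup_mem : sSup s ∈ s := hne.csSup_mem hfin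
    have h1 : (sSup s)⁻¹ ∈ s⁻¹ := by
      rw [Set.mem_inv, inv_inv]; exact hSup_mem
    refine le_antisymm (csInf_le hfin.inv.bddBelow h1) ?_
    refine le_csInf ⟨_, h1⟩ fun x hx => ?_
    rw [Set.mem_inv] at hx
    have hx' : x⁻¹ ≤ sSup s := le_csSup hfin.bddAbove hx
    have := inv_anti₀ (hpos _ hx) hx'
    rwa [inv_inv] at this

/-- Invariant anisotropic geometry A = I^{1/2} B I^{1/2}:
λ_min(A^{-1/2} I A^{-1/2}) = λ_min(B⁻¹) = 1/λ_max(B). -/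
theorem stmt_14 {n d : ℕ} (I B : (Fin n → ℝ) → Matrix (Fin d) (Fin d) ℝ)
    (hIc : Continuous I) (hI : ∀ θ, (I θ).PosDef) (hB : ∀ θ, (B θ).PosDef) :
    ∀ θ : Fin n → ℝ,
      minEig (sqrtInv ((hI θ).posSemidef.sqrt * B θ * (hI θ).posSemidef.sqrt) * I θ *
            sqrtInv ((hI θ).posSemidef.sqrt * B θ * (hI θ).posSemidef.sqrt))
          = minEig ((B θ)⁻¹) ∧
        minEig ((B θ)⁻¹) = (sSup (spectrum ℝ (B θ)))⁻¹ := by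
  intro θ
  classical
  set S := (hI θ).posSemidef.sqrt with hSdef
  have hSps : S.PosSemidef := sqrt_psd_aux (hI θ).posSemidef
  have hSS : S * S = I θ := sqrt_mul_self_aux (hI θ).posSemidef
  -- S is invertible
  have hSu : IsUnit S.det := by
    have : S.det * S.det = (I θ).det := by rw [← Matrix.det_mul, hSS]
    exact isUnit_of_mul_isUnit_left (this ▸ (hI θ).det_pos.ne'.isUnit)
  -- A = S * B * S is positive semidefinite
  have hAps : (S * B θ * S).PosSemidef := by
    have := (hB θ).posSemidef.mul_mul_conjTranspose_same S
    rwa [hSps.isHermitian.eq] at this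
  set Z := hAps.sqrt with hZdef
  have hZZ : Z * Z = S * B θ * S := sqrt_mul_self_aux hAps
  have hZu : IsUnit Z.det := by
    have hdet : Z.det * Z.det = (S * B θ * S).det := by rw [← Matrix.det_mul, hZZ]
    have : IsUnit (S * B θ * S).det := by
      rw [Matrix.det_mul, Matrix.det_mul]
      exact (hSu.mul (hB θ).det_pos.ne'.isUnit).mul hSu
    exact isUnit_of_mul_isUnit_left (hdet ▸ this)
  -- unfold sqrtInv
  have hsq : sqrtInv (S * B θ * S) = Z⁻¹ := by
    rw [sqrtInv, dif_pos hAps]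
  -- S * (S * B θ * S)⁻¹ * S = (B θ)⁻¹
  have hAinv : S * (S * B θ * S)⁻¹ * S = (B θ)⁻¹ := by
    rw [Matrix.mul_inv_rev, Matrix.mul_inv_rev]
    calc S * (S⁻¹ * ((B θ)⁻¹ * S⁻¹)) * S
        = (S * S⁻¹) * (B θ)⁻¹ * (S⁻¹ * S) := by noncomm_ring
      _ = (B θ)⁻¹ := by
          rw [Matrix.mul_nonsing_inv _ hSu, Matrix.nonsing_inv_mul _ hSu, one_mul, mul_one]
  -- Z⁻¹ * Z⁻¹ = (S * B θ * S)⁻¹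
  have hZinv : Z⁻¹ * Z⁻¹ = (S * B θ * S)⁻¹ := by
    rw [← Matrix.mul_inv_rev, hZZ]
  -- spectrum equality via conjugation by Z⁻¹ * S
  have hMu : IsUnit (Z⁻¹ * S) :=
    (Matrix.isUnit_nonsing_inv_iff.2 ((Matrix.isUnit_iff_isUnit_det _).2 hZu)).mul
      ((Matrix.isUnit_iff_isUnit_det _).2 hSu)
  have hspec : spectrum ℝ (Z⁻¹ * I θ * Z⁻¹) = spectrum ℝ ((B θ)⁻¹) := by
    have key := spectrum_conj_aux (Z⁻¹ * S) (S * (Z⁻¹ * Z⁻¹) * S) hMu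
    have hMinv : (Z⁻¹ * S)⁻¹ = S⁻¹ * Z := by
      rw [Matrix.mul_inv_rev, Matrix.nonsing_inv_nonsing_inv _ hZu]
    rw [hMinv] at key
    have hexp : (Z⁻¹ * S) * (S * (Z⁻¹ * Z⁻¹) * S) * (S⁻¹ * Z) = Z⁻¹ * I θ * Z⁻¹ := by
      have h1 : S * S⁻¹ = 1 := Matrix.mul_nonsing_inv _ hSu
      have h2 : Z⁻¹ * Z = 1 := Matrix.nonsing_inv_mul _ hZu
      calc (Z⁻¹ * S) * (S * (Z⁻¹ * Z⁻¹) * S) * (S⁻¹ * Z)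
          = Z⁻¹ * (S * S) * Z⁻¹ * (Z⁻¹ * ((S * S⁻¹) * Z)) := by noncomm_ring
        _ = Z⁻¹ * I θ * Z⁻¹ * (Z⁻¹ * Z) := by rw [hSS, h1, one_mul]
        _ = Z⁻¹ * I θ * Z⁻¹ := by rw [h2, mul_one]
    rw [hexp] at key
    rw [key, hZinv, hAinv]
  -- positivity and finiteness of the spectrum of B θ
  have hBspec : spectrum ℝ (B θ) = Set.range ((hB θ).isHermitian.eigenvalues) :=
    (hB θ).isHermitian.spectrum_real_eq_range_eigenvalues
  have hfin : (spectrum ℝ (B θ)).Finite := by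
    rw [hBspec]; exact Set.finite_range _
  have hpos : ∀ x ∈ spectrum ℝ (B θ), 0 < x := by
    rw [hBspec]
    rintro x ⟨i, rfl⟩
    exact (hB θ).eigenvalues_pos i
  -- spectrum of the inverse
  have hBu : IsUnit (B θ) := (hB θ).isUnit
  have hBinv_spec : spectrum ℝ ((B θ)⁻¹) = (spectrum ℝ (B θ))⁻¹ := by
    obtain ⟨u, hu⟩ := hBu
    rw [← hu, ← Matrix.coe_units_inv]
    exact (spectrum.map_inv u).symm
  constructor
  · rw [minEig, minEig, hsq, hspec]
  · rw [minEig, hBinv_spec]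
    exact sInf_inv_aux _ hfin hpos
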